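/- Define x(ξ,η) = ξ + η, y(ξ,η) = ξ·η, and μ(ξ,η) = log(η − ξ) on the domain {(ξ,η) ∈ ℝ² : η > ξ}. Then x, y, μ satisfy the twistor compatibility system at every point of this domain, i.e. x_{ξη} = μ_ξ·x_η + μ_η·x_ξ and y_{ξη} = μ_ξ·y_η + μ_η·y_ξ. -/

import Mathlib

/-- the orthotoric data `x = ξ + η`, `y = ξη`, `μ = log (η − ξ)`
satisfies the twistor compatibility system on `{η > ξ}`. -/
theorem stmt_3 (x y μ : ℝ → ℝ → ℝ)
    (hx : x = fun ξ η => ξ + η)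
    (hy : y = fun ξ η => ξ * η)
    (hμ : μ = fun ξ η => Real.log (η - ξ)) :
    ∀ ξ η : ℝ, ξ < η →
      (deriv (fun s => deriv (fun t => x t s) ξ) η
          = deriv (fun t => μ t η) ξ * deriv (fun s => x ξ s) η
            + deriv (fun s => μ ξ s) η * deriv (fun t => x t η) ξ) ∧
      (deriv (fun s => deriv (fun t => y t s) ξ) η
          = deriv (fun t => μ t η) ξ * deriv (fun s => y ξ s) η
            + deriv (fun s => μ ξ s) η * deriv (fun t => y t η) ξ) := by
  subst hx hy hμ
  intro ξ η hlt
  have hne : η - ξ ≠ 0 := sub_ne_zero.mpr hlt.ne'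
  have hμξ : deriv (fun t : ℝ => Real.log (η - t)) ξ = -(η - ξ)⁻¹ := by
    have h1 : HasDerivAt (fun t : ℝ => η - t) (-1) ξ := by
      simpa using (hasDerivAt_id ξ).const_sub η
    have := (Real.hasDerivAt_log hne).comp ξ h1
    simpa [Function.comp_def] using this.deriv
  have hμη : deriv (fun s : ℝ => Real.log (s - ξ)) η = (η - ξ)⁻¹ := by
    have h1 : HasDerivAt (fun s : ℝ => s - ξ) 1 η := by
      simpa using (hasDerivAt_id η).sub_const ξ
    have := (Real.hasDerivAt_log hne).comp η h1
    simpa [Function.comp_def] using this.deriv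
  constructor
  · have h1 : (fun s : ℝ => deriv (fun t => t + s) ξ) = fun _ => (1 : ℝ) := by
      funext s
      simp [deriv_add_const]
    have h2 : deriv (fun s : ℝ => ξ + s) η = 1 := by
      simpa using ((hasDerivAt_id η).const_add ξ).deriv
    have h3 : deriv (fun t : ℝ => t + η) ξ = 1 := by
      simpa using ((hasDerivAt_id ξ).add_const η).deriv
    rw [h1, hμξ, hμη, h2, h3, deriv_const]
    ring
  · have h1 : (fun s : ℝ => deriv (fun t => t * s) ξ) = fun s => s := by
      funext s
      simp [deriv_mul_const]
    rw [h1, hμξ, hμη]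
    simp only [deriv_id'']
    have h2 : deriv (fun s : ℝ => ξ * s) η = ξ := by
      simpa using ((hasDerivAt_id η).const_mul ξ).deriv
    have h3 : deriv (fun t : ℝ => t * η) ξ = η := by
      simpa using ((hasDerivAt_id ξ).mul_const η).deriv
    rw [h2, h3]
    field_simp
    ring
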